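/- For every positive integer n, scc'(G_n) = n² + 4n + 2. -/

import Mathlib

open Finset

/-- A clique covering of `G`: a finite family of cliques covering every edge. -/
def IsCliqueCover {V : Type*} (G : SimpleGraph V) (𝒞 : Finset (Finset V)) : Prop :=
  (∀ C ∈ 𝒞, G.IsClique (C : Set V)) ∧
  ∀ u v, G.Adj u v → ∃ C ∈ 𝒞, u ∈ C ∧ v ∈ C

/-- A clique partition of `G`: every edge lies in exactly one clique of the family. -/
def IsCliquePartition {V : Type*} (G : SimpleGraph V) (𝒞 : Finset (Finset V)) : Prop :=
  (∀ C ∈ 𝒞, G.IsClique (C : Set V)) ∧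
  ∀ u v, G.Adj u v → ∃! C, C ∈ 𝒞 ∧ u ∈ C ∧ v ∈ C

/-- The sigma clique cover number: minimum total size of cliques in a clique covering. -/
noncomputable def scc {V : Type*} (G : SimpleGraph V) : ℕ :=
  sInf {k | ∃ 𝒞, IsCliqueCover G 𝒞 ∧ ∑ C ∈ 𝒞, C.card = k}

/-- The sigma clique partition number: minimum total size of cliques in a clique partition. -/
noncomputable def scp {V : Type*} (G : SimpleGraph V) : ℕ :=
  sInf {k | ∃ 𝒞, IsCliquePartition G 𝒞 ∧ ∑ C ∈ 𝒞, C.card = k}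

/-- The clique cover number: minimum number of cliques in a clique covering. -/
noncomputable def cc {V : Type*} (G : SimpleGraph V) : ℕ :=
  sInf {k | ∃ 𝒞, IsCliqueCover G 𝒞 ∧ 𝒞.card = k}

/-- The clique partition number: minimum number of cliques in a clique partition. -/
noncomputable def cp {V : Type*} (G : SimpleGraph V) : ℕ :=
  sInf {k | ∃ 𝒞, IsCliquePartition G 𝒞 ∧ 𝒞.card = k}

/-- `scc'`: the minimum total size of cliques over clique coverings achieving `cc G`. -/
noncomputable def scc' {V : Type*} (G : SimpleGraph V) : ℕ :=
  sInf {k | ∃ 𝒞, IsCliqueCover G 𝒞 ∧ 𝒞.card = cc G ∧ ∑ C ∈ 𝒞, C.card = k}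
/-- The vertex set of the graph `Gₙ`: `x₀`, `y₀`, `X = {x i}`, `Y = {y i}`, `Z = {z i}`. -/
inductive Vtx (n : ℕ) : Type where
  | x0 : Vtx n
  | y0 : Vtx n
  | x : Fin n → Vtx n
  | y : Fin n → Vtx n
  | z : Fin n → Vtx n
  deriving DecidableEq, Fintype

/-- Membership in `X ∪ {x₀}`. -/
def inXx0 {n : ℕ} : Vtx n → Prop
  | .x0 => True
  | .x _ => True
  | _ => False

/-- Membership in `Y ∪ {y₀}`. -/
def inYy0 {n : ℕ} : Vtx n → Prop
  | .y0 => True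
  | .y _ => True
  | _ => False

/-- Membership in `Z`. -/
def inZ {n : ℕ} : Vtx n → Prop
  | .z _ => True
  | _ => False

/-- Membership in `X ∪ Y`. -/
def inXY {n : ℕ} : Vtx n → Prop
  | .x _ => True
  | .y _ => True
  | _ => False

/-- `xyPair u v` holds iff `u = x i` and `v = y i` for some `i`. -/
def xyPair {n : ℕ} : Vtx n → Vtx n → Prop
  | .x i, .y j => i = j
  | _, _ => False

/-- The graph `Gₙ`: `X ∪ {x₀}`, `Y ∪ {y₀}` and `Z` are cliques, every vertex of `Z` is
adjacent to every vertex of `X ∪ Y`, and `x i` is adjacent to `y j` iff `i = j`. -/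
def Gn (n : ℕ) : SimpleGraph (Vtx n) where
  Adj u v := u ≠ v ∧ (inXx0 u ∧ inXx0 v ∨ inYy0 u ∧ inYy0 v ∨ inZ u ∧ inZ v ∨
    inZ u ∧ inXY v ∨ inXY u ∧ inZ v ∨ xyPair u v ∨ xyPair v u)
  symm := by
    refine ⟨?_⟩
    rintro u v ⟨h1, h2⟩
    exact ⟨h1.symm, by tauto⟩
  loopless := ⟨fun u h => h.1 rfl⟩
namespace Stmt3

open Vtx Finset

variable {n : ℕ}

/-! ### Adjacency lemmas -/

lemma adj_x0_x (i : Fin n) : (Gn n).Adj x0 (x i) := by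
  simp [Gn, inXx0, inYy0, inZ, inXY, xyPair]

lemma adj_y0_y (i : Fin n) : (Gn n).Adj y0 (y i) := by
  simp [Gn, inXx0, inYy0, inZ, inXY, xyPair]

lemma adj_x_y (i : Fin n) : (Gn n).Adj (x i) (y i) := by
  simp [Gn, inXx0, inYy0, inZ, inXY, xyPair]

lemma adj_x_z (i k : Fin n) : (Gn n).Adj (x i) (z k) := by
  simp [Gn, inXx0, inYy0, inZ, inXY, xyPair]

lemma not_adj_x0_y0 : ¬ (Gn n).Adj x0 y0 := by
  simp [Gn, inXx0, inYy0, inZ, inXY, xyPair]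

lemma not_adj_x0_y (i : Fin n) : ¬ (Gn n).Adj x0 (y i) := by
  simp [Gn, inXx0, inYy0, inZ, inXY, xyPair]

lemma not_adj_x0_z (k : Fin n) : ¬ (Gn n).Adj x0 (z k) := by
  simp [Gn, inXx0, inYy0, inZ, inXY, xyPair]

lemma not_adj_y0_z (k : Fin n) : ¬ (Gn n).Adj y0 (z k) := by
  simp [Gn, inXx0, inYy0, inZ, inXY, xyPair]

lemma not_adj_x_y {i j : Fin n} (h : i ≠ j) : ¬ (Gn n).Adj (x i) (y j) := by
  simp [Gn, inXx0, inYy0, inZ, inXY, xyPair, h]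

/-- If two distinct vertices lie in a common clique, they are adjacent. -/
lemma clique_adj {C : Finset (Vtx n)} (hC : (Gn n).IsClique (C : Set (Vtx n)))
    {u v : Vtx n} (hu : u ∈ C) (hv : v ∈ C) (h : u ≠ v) : (Gn n).Adj u v :=
  hC (Finset.mem_coe.2 hu) (Finset.mem_coe.2 hv) h

/-! ### The explicit optimal cover -/

def CX (n : ℕ) : Finset (Vtx n) := insert x0 (univ.image x)
def CY (n : ℕ) : Finset (Vtx n) := insert y0 (univ.image y)
def CZ (n : ℕ) (i : Fin n) : Finset (Vtx n) := insert (x i) (insert (y i) (univ.image z))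
def Cov (n : ℕ) : Finset (Finset (Vtx n)) := insert (CX n) (insert (CY n) (univ.image (CZ n)))

lemma x_inj : Function.Injective (x : Fin n → Vtx n) := fun a b h => by simpa using h
lemma y_inj : Function.Injective (y : Fin n → Vtx n) := fun a b h => by simpa using h
lemma z_inj : Function.Injective (z : Fin n → Vtx n) := fun a b h => by simpa using h

lemma card_CX : (CX n).card = n + 1 := by
  rw [CX, card_insert_of_notMem (by simp), card_image_of_injective _ x_inj, card_univ,
    Fintype.card_fin]

lemma card_CY : (CY n).card = n + 1 := by
  rw [CY, card_insert_of_notMem (by simp), card_image_of_injective _ y_inj, card_univ,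
    Fintype.card_fin]

lemma card_CZ (i : Fin n) : (CZ n i).card = n + 2 := by
  rw [CZ, card_insert_of_notMem (by simp), card_insert_of_notMem (by simp),
    card_image_of_injective _ z_inj, card_univ, Fintype.card_fin]

lemma CZ_inj : Function.Injective (CZ n) := by
  intro i j h
  have hx : (x i : Vtx n) ∈ CZ n j := h ▸ (by simp [CZ])
  simpa [CZ] using hx

lemma x0_not_mem_CZ (i : Fin n) : (x0 : Vtx n) ∉ CZ n i := by simp [CZ]
lemma y0_not_mem_CZ (i : Fin n) : (y0 : Vtx n) ∉ CZ n i := by simp [CZ]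

lemma CX_ne_CY : CX n ≠ CY n := by
  intro h
  have : (x0 : Vtx n) ∈ CY n := h ▸ (by simp [CX])
  simp [CY] at this

lemma CX_ne_CZ (i : Fin n) : CX n ≠ CZ n i := by
  intro h
  exact x0_not_mem_CZ i (h ▸ (by simp [CX]))

lemma CY_ne_CZ (i : Fin n) : CY n ≠ CZ n i := by
  intro h
  exact y0_not_mem_CZ i (h ▸ (by simp [CY]))

lemma card_Cov : (Cov n).card = n + 2 := by
  rw [Cov, card_insert_of_notMem (by
      simp only [mem_insert, mem_image]
      rintro (h | ⟨i, _, h⟩)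
      · exact CX_ne_CY h
      · exact CX_ne_CZ i h.symm),
    card_insert_of_notMem (by
      simp only [mem_image]
      rintro ⟨i, _, h⟩
      exact CY_ne_CZ i h.symm),
    card_image_of_injective _ CZ_inj, card_univ, Fintype.card_fin]

lemma sum_Cov : ∑ C ∈ Cov n, C.card = n ^ 2 + 4 * n + 2 := by
  rw [Cov, sum_insert (by
      simp only [mem_insert, mem_image]
      rintro (h | ⟨i, _, h⟩)
      · exact CX_ne_CY h
      · exact CX_ne_CZ i h.symm),
    sum_insert (by
      simp only [mem_image]
      rintro ⟨i, _, h⟩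
      exact CY_ne_CZ i h.symm),
    sum_image (fun a _ b _ h => CZ_inj h), card_CX, card_CY]
  simp only [card_CZ, sum_const, card_univ, Fintype.card_fin, smul_eq_mul]
  ring

lemma isClique_CX : (Gn n).IsClique (CX n : Set (Vtx n)) := by
  intro u hu v hv huv
  simp only [CX, coe_insert, coe_image, coe_univ, Set.image_univ, Set.mem_insert_iff,
    Set.mem_range] at hu hv
  rcases hu with rfl | ⟨i, rfl⟩ <;> rcases hv with rfl | ⟨j, rfl⟩ <;>
    simp_all [Gn, inXx0, inYy0, inZ, inXY, xyPair]

lemma isClique_CY : (Gn n).IsClique (CY n : Set (Vtx n)) := by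
  intro u hu v hv huv
  simp only [CY, coe_insert, coe_image, coe_univ, Set.image_univ, Set.mem_insert_iff,
    Set.mem_range] at hu hv
  rcases hu with rfl | ⟨i, rfl⟩ <;> rcases hv with rfl | ⟨j, rfl⟩ <;>
    simp_all [Gn, inXx0, inYy0, inZ, inXY, xyPair]

lemma isClique_CZ (i : Fin n) : (Gn n).IsClique (CZ n i : Set (Vtx n)) := by
  intro u hu v hv huv
  simp only [CZ, coe_insert, coe_image, coe_univ, Set.image_univ, Set.mem_insert_iff,
    Set.mem_range] at hu hv
  rcases hu with rfl | rfl | ⟨k, rfl⟩ <;> rcases hv with rfl | rfl | ⟨l, rfl⟩ <;>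
    simp_all [Gn, inXx0, inYy0, inZ, inXY, xyPair]

lemma CX_mem : CX n ∈ Cov n := mem_insert_self _ _
lemma CY_mem : CY n ∈ Cov n := mem_insert_of_mem (mem_insert_self _ _)
lemma CZ_mem (i : Fin n) : CZ n i ∈ Cov n :=
  mem_insert_of_mem (mem_insert_of_mem (mem_image_of_mem _ (mem_univ i)))

lemma x0_mem_CX : (x0 : Vtx n) ∈ CX n := mem_insert_self _ _
lemma x_mem_CX (i : Fin n) : x i ∈ CX n := mem_insert_of_mem (mem_image_of_mem _ (mem_univ i))
lemma y0_mem_CY : (y0 : Vtx n) ∈ CY n := mem_insert_self _ _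
lemma y_mem_CY (i : Fin n) : y i ∈ CY n := mem_insert_of_mem (mem_image_of_mem _ (mem_univ i))
lemma x_mem_CZ (i : Fin n) : x i ∈ CZ n i := mem_insert_self _ _
lemma y_mem_CZ (i : Fin n) : y i ∈ CZ n i := mem_insert_of_mem (mem_insert_self _ _)
lemma z_mem_CZ (i k : Fin n) : z k ∈ CZ n i :=
  mem_insert_of_mem (mem_insert_of_mem (mem_image_of_mem _ (mem_univ k)))

lemma cover_Cov : IsCliqueCover (Gn n) (Cov n) := by
  constructor
  · intro C hC
    simp only [Cov, mem_insert, mem_image, mem_univ, true_and] at hC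
    rcases hC with rfl | rfl | ⟨i, rfl⟩
    exacts [isClique_CX, isClique_CY, isClique_CZ i]
  · intro u v huv
    rcases u with _ | _ | i | i | k <;> rcases v with _ | _ | j | j | l <;>
      simp [Gn, inXx0, inYy0, inZ, inXY, xyPair] at huv <;>
      first
      | exact ⟨CX n, CX_mem, x0_mem_CX, x_mem_CX _⟩
      | exact ⟨CX n, CX_mem, x_mem_CX _, x0_mem_CX⟩
      | exact ⟨CX n, CX_mem, x_mem_CX _, x_mem_CX _⟩
      | exact ⟨CY n, CY_mem, y0_mem_CY, y_mem_CY _⟩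
      | exact ⟨CY n, CY_mem, y_mem_CY _, y0_mem_CY⟩
      | exact ⟨CY n, CY_mem, y_mem_CY _, y_mem_CY _⟩
      | exact ⟨CZ n k, CZ_mem k, z_mem_CZ _ _, z_mem_CZ _ _⟩
      | exact ⟨CZ n i, CZ_mem i, x_mem_CZ i, z_mem_CZ _ _⟩
      | exact ⟨CZ n i, CZ_mem i, y_mem_CZ i, z_mem_CZ _ _⟩
      | exact ⟨CZ n j, CZ_mem j, z_mem_CZ _ _, x_mem_CZ j⟩
      | exact ⟨CZ n j, CZ_mem j, z_mem_CZ _ _, y_mem_CZ j⟩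
      | (obtain rfl := huv
         first
         | exact ⟨CZ n i, CZ_mem i, x_mem_CZ i, y_mem_CZ i⟩
         | exact ⟨CZ n i, CZ_mem i, y_mem_CZ i, x_mem_CZ i⟩
         | exact ⟨CZ n j, CZ_mem j, x_mem_CZ j, y_mem_CZ j⟩
         | exact ⟨CZ n j, CZ_mem j, y_mem_CZ j, x_mem_CZ j⟩)

lemma not_adj_y0_x (i : Fin n) : ¬ (Gn n).Adj y0 (x i) := by
  simp [Gn, inXx0, inYy0, inZ, inXY, xyPair]

lemma exists_T (hn : 1 ≤ n) {𝒞 : Finset (Finset (Vtx n))} (h : IsCliqueCover (Gn n) 𝒞) :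
    ∃ (Cx Cy : Finset (Vtx n)) (g : Fin n → Finset (Vtx n)),
      Cx ∈ 𝒞 ∧ Cy ∈ 𝒞 ∧ (∀ i, g i ∈ 𝒞) ∧
      x0 ∈ Cx ∧ y0 ∈ Cy ∧ (∀ i, x i ∈ g i) ∧ (∀ i, y i ∈ g i) ∧
      Function.Injective g ∧ (∀ i, Cx ≠ g i) ∧ (∀ i, Cy ≠ g i) ∧ Cx ≠ Cy := by
  obtain ⟨Cx, hCx, hx0, -⟩ := h.2 _ _ (adj_x0_x (⟨0, hn⟩ : Fin n))
  obtain ⟨Cy, hCy, hy0, -⟩ := h.2 _ _ (adj_y0_y (⟨0, hn⟩ : Fin n))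
  choose g hg hxy using fun i => h.2 _ _ (adj_x_y i)
  have hgx : ∀ i, x i ∈ g i := fun i => (hxy i).1
  have hgy : ∀ i, y i ∈ g i := fun i => (hxy i).2
  refine ⟨Cx, Cy, g, hCx, hCy, hg, hx0, hy0, hgx, hgy, ?_, ?_, ?_, ?_⟩
  · intro i j hij
    by_contra hne
    exact not_adj_x_y hne
      (clique_adj (h.1 _ (hg j)) (hij ▸ hgx i) (hgy j) (by simp))
  · intro i hi
    exact not_adj_x0_y i
      (clique_adj (h.1 _ (hg i)) (hi ▸ hx0) (hgy i) (by simp))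
  · intro i hi
    exact not_adj_y0_x i
      (clique_adj (h.1 _ (hg i)) (hi ▸ hy0) (hgx i) (by simp))
  · intro hxyeq
    exact not_adj_x0_y0 (clique_adj (h.1 _ hCy) (hxyeq ▸ hx0) hy0 (by simp))

lemma cc_Gn (hn : 1 ≤ n) : cc (Gn n) = n + 2 := by
  apply le_antisymm
  · exact Nat.sInf_le ⟨Cov n, cover_Cov, card_Cov⟩
  · refine le_csInf ⟨n + 2, Cov n, cover_Cov, card_Cov⟩ ?_
    rintro k ⟨𝒞, h, rfl⟩
    obtain ⟨Cx, Cy, g, hCx, hCy, hg, hx0, hy0, hgx, hgy, hinj, hxg, hyg, hxyne⟩ :=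
      exists_T hn h
    have h2 : Cy ∉ univ.image g := by
      simp only [mem_image]
      rintro ⟨i, -, hi⟩
      exact hyg i hi.symm
    have h1 : Cx ∉ insert Cy (univ.image g) := by
      simp only [mem_insert, mem_image]
      rintro (rfl | ⟨i, -, hi⟩)
      · exact hxyne rfl
      · exact hxg i hi.symm
    calc n + 2 = (insert Cx (insert Cy (univ.image g))).card := by
          rw [card_insert_of_notMem h1, card_insert_of_notMem h2,
            card_image_of_injective _ hinj, card_univ, Fintype.card_fin]
      _ ≤ 𝒞.card := card_le_card (by
          intro C hC
          simp only [mem_insert, mem_image] at hC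
          rcases hC with rfl | rfl | ⟨i, -, rfl⟩
          exacts [hCx, hCy, hg i])

lemma sum_lower (hn : 1 ≤ n) {𝒞 : Finset (Finset (Vtx n))}
    (h : IsCliqueCover (Gn n) 𝒞) (hcard : 𝒞.card = n + 2) :
    n ^ 2 + 4 * n + 2 ≤ ∑ C ∈ 𝒞, C.card := by
  obtain ⟨Cx, Cy, g, hCx, hCy, hg, hx0, hy0, hgx, hgy, hinj, hxg, hyg, hxyne⟩ :=
    exists_T hn h
  have h2 : Cy ∉ univ.image g := by
    simp only [mem_image]
    rintro ⟨i, -, hi⟩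
    exact hyg i hi.symm
  have h1 : Cx ∉ insert Cy (univ.image g) := by
    simp only [mem_insert, mem_image]
    rintro (rfl | ⟨i, -, hi⟩)
    · exact hxyne rfl
    · exact hxg i hi.symm
  have hTsub : insert Cx (insert Cy (univ.image g)) ⊆ 𝒞 := by
    intro C hC
    simp only [mem_insert, mem_image] at hC
    rcases hC with rfl | rfl | ⟨i, -, rfl⟩
    exacts [hCx, hCy, hg i]
  have hTcard : (insert Cx (insert Cy (univ.image g))).card = n + 2 := by
    rw [card_insert_of_notMem h1, card_insert_of_notMem h2,
      card_image_of_injective _ hinj, card_univ, Fintype.card_fin]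
  have heq : 𝒞 = insert Cx (insert Cy (univ.image g)) :=
    (eq_of_subset_of_card_le hTsub (by omega)).symm
  -- every vertex of X lies in Cx
  have hxCx : ∀ j, x j ∈ Cx := by
    intro j
    obtain ⟨C, hC, hu, hv⟩ := h.2 _ _ (adj_x0_x j)
    rw [heq] at hC
    simp only [mem_insert, mem_image] at hC
    rcases hC with rfl | rfl | ⟨i, -, rfl⟩
    · exact hv
    · exact absurd (clique_adj (h.1 _ hCy) hu hy0 (by simp)) not_adj_x0_y0
    · exact absurd (clique_adj (h.1 _ (hg i)) hu (hgy i) (by simp)) (not_adj_x0_y i)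
  have hyCy : ∀ j, y j ∈ Cy := by
    intro j
    obtain ⟨C, hC, hu, hv⟩ := h.2 _ _ (adj_y0_y j)
    rw [heq] at hC
    simp only [mem_insert, mem_image] at hC
    rcases hC with rfl | rfl | ⟨i, -, rfl⟩
    · exact absurd (clique_adj (h.1 _ hCx) hx0 hu (by simp)) not_adj_x0_y0
    · exact hv
    · exact absurd (clique_adj (h.1 _ (hg i)) hu (hgx i) (by simp)) (not_adj_y0_x i)
  have hzg : ∀ i k, z k ∈ g i := by
    intro i k
    obtain ⟨C, hC, hu, hv⟩ := h.2 _ _ (adj_x_z i k)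
    rw [heq] at hC
    simp only [mem_insert, mem_image] at hC
    rcases hC with rfl | rfl | ⟨j, -, rfl⟩
    · exact absurd (clique_adj (h.1 _ hCx) hx0 hv (by simp)) (not_adj_x0_z k)
    · exact absurd (clique_adj (h.1 _ hCy) hy0 hv (by simp)) (not_adj_y0_z k)
    · have hij : i = j := by
        by_contra hne
        exact not_adj_x_y hne (clique_adj (h.1 _ (hg j)) hu (hgy j) (by simp))
      exact hij ▸ hv
  have hCxcard : n + 1 ≤ Cx.card := by
    rw [← card_CX (n := n)]
    refine card_le_card ?_
    intro u hu
    simp only [CX, mem_insert, mem_image, mem_univ, true_and] at hu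
    rcases hu with rfl | ⟨i, rfl⟩
    exacts [hx0, hxCx i]
  have hCycard : n + 1 ≤ Cy.card := by
    rw [← card_CY (n := n)]
    refine card_le_card ?_
    intro u hu
    simp only [CY, mem_insert, mem_image, mem_univ, true_and] at hu
    rcases hu with rfl | ⟨i, rfl⟩
    exacts [hy0, hyCy i]
  have hgcard : ∀ i, n + 2 ≤ (g i).card := by
    intro i
    rw [← card_CZ (n := n) i]
    refine card_le_card ?_
    intro u hu
    simp only [CZ, mem_insert, mem_image, mem_univ, true_and] at hu
    rcases hu with rfl | rfl | ⟨k, rfl⟩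
    exacts [hgx i, hgy i, hzg i k]
  have hsumg : n * (n + 2) ≤ ∑ i : Fin n, (g i).card := by
    calc n * (n + 2) = ∑ _i : Fin n, (n + 2) := by
          simp [sum_const, card_univ, mul_comm]
      _ ≤ _ := sum_le_sum fun i _ => hgcard i
  rw [heq, sum_insert h1, sum_insert h2, sum_image fun a _ b _ hab => hinj hab]
  have : n ^ 2 + 4 * n + 2 = (n + 1) + ((n + 1) + n * (n + 2)) := by ring
  omega

end Stmt3


/-- For every positive integer `n`, `scc'(Gₙ) = n² + 4n + 2`. -/
theorem stmt_3 (n : ℕ) (hn : 1 ≤ n) : scc' (Gn n) = n ^ 2 + 4 * n + 2 := by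
  have hcc := Stmt3.cc_Gn (n := n) hn
  apply le_antisymm
  · exact Nat.sInf_le ⟨Stmt3.Cov n, Stmt3.cover_Cov, by rw [hcc]; exact Stmt3.card_Cov,
      Stmt3.sum_Cov⟩
  · refine le_csInf ⟨_, Stmt3.Cov n, Stmt3.cover_Cov, by rw [hcc]; exact Stmt3.card_Cov,
      Stmt3.sum_Cov⟩ ?_
    rintro k ⟨𝒞, h, hk, rfl⟩
    exact Stmt3.sum_lower hn h (by rw [hcc] at hk; exact hk)
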